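/- For every integer N ≥ 1, h = 1/N and every z ∈ [0,1], the coefficients C̊_β(z) also reproduce the exponential e^{x} exactly: Σ_{β=0}^N C̊_β(z) · e^{hβ} = e^{z} (equivalently, the constant D = (1/4)Σ_{γ=0}^N C̊_γ(z) e^{hγ} appearing in the construction equals e^{z}/4). -/

import Mathlib

/-- The optimal coefficients `C̊_β(z)` of the optimal interpolation formula in
`W₂^{(1,0)}(0,1)` with equally spaced nodes `x_β = βh`, `h = 1/N`. -/
noncomputable def optC1 (N : ℕ) (z : ℝ) (β : ℕ) : ℝ :=
  let h : ℝ := 1 / N;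
  1 / (2 * (1 - Real.exp (2 * h))) *
    (Real.sign (z - h * β - h) * (Real.exp (h * β + 2 * h - z) - Real.exp (z - h * β))
      + Real.sign (z - h * β + h) * (Real.exp (h * β - z) - Real.exp (z - h * β + 2 * h))
      + (1 + Real.exp (2 * h)) * Real.sign (z - h * β) *
          (Real.exp (z - h * β) - Real.exp (h * β - z)))

/-- Auxiliary telescoping function `F(b) = (e^{2hb-z} - e^z)·sign(z - hb)`. -/
noncomputable def Faux (h z : ℝ) (b : ℤ) : ℝ :=
  (Real.exp (2 * h * b - z) - Real.exp z) * Real.sign (z - h * b)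

lemma optC1_term_eq (N : ℕ) (hN : 1 ≤ N) (z : ℝ) (β : ℕ) :
    optC1 N z β * Real.exp ((1 / N : ℝ) * β) * (2 * (1 - Real.exp (2 * (1 / N : ℝ)))) =
      (Faux (1 / N : ℝ) z (β + 1) - Faux (1 / N : ℝ) z β)
        - Real.exp (2 * (1 / N : ℝ)) * (Faux (1 / N : ℝ) z β - Faux (1 / N : ℝ) z (β - 1)) := by
  have hN0 : (0:ℝ) < N := by exact_mod_cast hN
  set h : ℝ := 1 / N with hdef
  have hh : 0 < h := by positivity
  have ht : 1 < Real.exp (2 * h) := by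
    calc (1:ℝ) = Real.exp 0 := (Real.exp_zero).symm
    _ < Real.exp (2 * h) := Real.exp_lt_exp.mpr (by linarith)
  have hX : (2:ℝ) * (1 - Real.exp (2 * h)) ≠ 0 := by nlinarith
  simp only [optC1, Faux]
  push_cast
  rw [show z - h * ((β:ℝ) + 1) = z - h * β - h by ring,
      show z - h * ((β:ℝ) - 1) = z - h * β + h by ring]
  set s0 := Real.sign (z - h * β)
  set s1 := Real.sign (z - h * β - h)
  set s2 := Real.sign (z - h * β + h)
  have E1 : Real.exp (h * β + 2 * h - z) = Real.exp (h*β) * Real.exp h ^ 2 / Real.exp z := by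
    rw [show h * (β:ℝ) + 2 * h - z = h * β + h + h - z by ring, Real.exp_sub, Real.exp_add,
      Real.exp_add]; ring
  have E2 : Real.exp (z - h * β) = Real.exp z / Real.exp (h*β) := by rw [Real.exp_sub]
  have E3 : Real.exp (h * β - z) = Real.exp (h*β) / Real.exp z := by rw [Real.exp_sub]
  have E4 : Real.exp (z - h * β + 2 * h) = Real.exp z * Real.exp h ^ 2 / Real.exp (h*β) := by
    rw [show z - h * (β:ℝ) + 2 * h = z + h + h - h * β by ring, Real.exp_sub, Real.exp_add,
      Real.exp_add]; ring
  have E5 : Real.exp (2 * h) = Real.exp h ^ 2 := by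
    rw [show 2 * h = h + h by ring, Real.exp_add]; ring
  have E6 : Real.exp (2 * h * ((β:ℝ) + 1) - z) = Real.exp (h*β) ^ 2 * Real.exp h ^ 2 / Real.exp z := by
    rw [show 2 * h * ((β:ℝ) + 1) - z = h * β + h * β + (h + h) - z by ring, Real.exp_sub,
      Real.exp_add, Real.exp_add, Real.exp_add]; ring
  have E7 : Real.exp (2 * h * (β:ℝ) - z) = Real.exp (h*β) ^ 2 / Real.exp z := by
    rw [show 2 * h * (β:ℝ) - z = h * β + h * β - z by ring, Real.exp_sub, Real.exp_add]; ring
  have E8 : Real.exp (2 * h * ((β:ℝ) - 1) - z)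
      = Real.exp (h*β) ^ 2 / (Real.exp h ^ 2 * Real.exp z) := by
    rw [show 2 * h * ((β:ℝ) - 1) - z = h * β + h * β - (h + h + z) by ring, Real.exp_sub,
      Real.exp_add, Real.exp_add, Real.exp_add]; ring
  rw [E1, E2, E3, E4, E5, E6, E7, E8]
  have hA := Real.exp_ne_zero (h * (β:ℝ))
  have hT := Real.exp_ne_zero h
  have hW := Real.exp_ne_zero z
  have hX2 : (1:ℝ) - Real.exp h ^ 2 ≠ 0 := by rw [← E5]; intro hc; apply hX; rw [hc]; ring
  field_simp
  ring

lemma optC1_endpoint (N : ℕ) (hN : 1 ≤ N) (z : ℝ) (hz : z ∈ Set.Icc (0 : ℝ) 1) :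
    (Faux (1 / N : ℝ) z (N + 1) - Faux (1 / N : ℝ) z 0)
      - Real.exp (2 * (1 / N : ℝ)) * (Faux (1 / N : ℝ) z N - Faux (1 / N : ℝ) z (-1))
      = Real.exp z * (2 * (1 - Real.exp (2 * (1 / N : ℝ)))) := by
  have hN0 : (0:ℝ) < N := by exact_mod_cast hN
  set h : ℝ := 1 / N with hdef
  have hh : 0 < h := by positivity
  have hhN : h * (N:ℝ) = 1 := by rw [hdef]; field_simp
  obtain ⟨hz0, hz1⟩ := hz
  simp only [Faux]
  push_cast
  rw [show 2 * h * ((N:ℝ) + 1) - z = 1 + 1 + (h + h) - z by linear_combination 2 * hhN,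
      show z - h * ((N:ℝ) + 1) = z - (1 + h) by linear_combination -hhN,
      show 2 * h * (N:ℝ) - z = 1 + 1 - z by linear_combination 2 * hhN,
      show z - h * (N:ℝ) = z - 1 by linear_combination -hhN]
  have s1 : Real.sign (z - (1 + h)) = -1 := Real.sign_of_neg (by linarith)
  have s2 : Real.sign (z - h * (-1:ℝ)) = 1 := Real.sign_of_pos (by nlinarith)
  rw [s1, s2]
  have E1 : Real.exp (1 + 1 + (h + h) - z)
      = Real.exp 1 ^ 2 * Real.exp h ^ 2 / Real.exp z := by
    rw [Real.exp_sub, Real.exp_add, Real.exp_add, Real.exp_add]; ring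
  have E2 : Real.exp (1 + 1 - z) = Real.exp 1 ^ 2 / Real.exp z := by
    rw [Real.exp_sub, Real.exp_add]; ring
  have E3 : Real.exp (2 * h * (-1:ℝ) - z) = 1 / (Real.exp h ^ 2 * Real.exp z) := by
    rw [show 2 * h * (-1:ℝ) - z = 0 - (h + h + z) by ring, Real.exp_sub, Real.exp_add,
      Real.exp_add, Real.exp_zero]; ring
  have E4 : Real.exp (2 * h * (0:ℝ) - z) = 1 / Real.exp z := by
    rw [show 2 * h * (0:ℝ) - z = 0 - z by ring, Real.exp_sub, Real.exp_zero]
  have E5 : Real.exp (2 * h) = Real.exp h ^ 2 := by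
    rw [show 2 * h = h + h by ring, Real.exp_add]; ring
  rw [E1, E2, E3, E4, E5]
  have hT := Real.exp_ne_zero h
  have hW := Real.exp_ne_zero z
  rcases eq_or_lt_of_le hz0 with h0 | h0
  · -- z = 0
    have s3 : Real.sign (z - h * (0:ℝ)) = 0 := by
      rw [show z - h * (0:ℝ) = z by ring, ← h0, Real.sign_zero]
    have s4 : Real.sign (z - 1) = -1 := Real.sign_of_neg (by linarith)
    subst h0
    rw [s3, s4]; simp only [Real.exp_zero]; field_simp; ring
  · rcases eq_or_lt_of_le hz1 with h1 | h1
    · -- z = 1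
      have s3 : Real.sign (z - h * (0:ℝ)) = 1 := Real.sign_of_pos (by nlinarith)
      have s4 : Real.sign (z - 1) = 0 := by rw [h1, sub_self, Real.sign_zero]
      subst h1
      have e2 : Real.exp 2 = Real.exp 1 ^ 2 := by
        rw [show (2:ℝ) = 1 + 1 by norm_num, Real.exp_add]; ring
      rw [s3, s4]; field_simp; ring
    · -- 0 < z < 1
      have s3 : Real.sign (z - h * (0:ℝ)) = 1 := Real.sign_of_pos (by nlinarith)
      have s4 : Real.sign (z - 1) = -1 := Real.sign_of_neg (by linarith)
      rw [s3, s4]; field_simp; ring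

/-- For every `N ≥ 1`, `h = 1/N` and every `z ∈ [0,1]`, the optimal coefficients also
reproduce the exponential `e^{x}` exactly: `Σ_{β=0}^N C̊_β(z)·e^{hβ} = e^{z}`
(equivalently, the constant `D = (1/4)·Σ_γ C̊_γ(z) e^{hγ}` of the construction equals
`e^z/4`). -/
theorem optC1_reproduces_exp_pos (N : ℕ) (hN : 1 ≤ N) (z : ℝ)
    (hz : z ∈ Set.Icc (0 : ℝ) 1) :
    (∑ β ∈ Finset.range (N + 1), optC1 N z β * Real.exp ((1 / N : ℝ) * β)
        = Real.exp z) ∧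
    1 / 4 * (∑ γ ∈ Finset.range (N + 1), optC1 N z γ * Real.exp ((1 / N : ℝ) * γ))
      = Real.exp z / 4 := by
  have hN0 : (0:ℝ) < N := by exact_mod_cast hN
  have hh : 0 < (1 / N : ℝ) := by positivity
  have ht : 1 < Real.exp (2 * (1 / N : ℝ)) := by
    calc (1:ℝ) = Real.exp 0 := (Real.exp_zero).symm
    _ < Real.exp (2 * (1 / N : ℝ)) := Real.exp_lt_exp.mpr (by linarith)
  have hX : (2:ℝ) * (1 - Real.exp (2 * (1 / N : ℝ))) ≠ 0 := by nlinarith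
  have tel1 : ∑ β ∈ Finset.range (N + 1),
      (Faux (1 / N : ℝ) z (β + 1) - Faux (1 / N : ℝ) z β)
        = Faux (1 / N : ℝ) z (N + 1) - Faux (1 / N : ℝ) z 0 := by
    have := Finset.sum_range_sub (f := fun n : ℕ => Faux (1 / N : ℝ) z n) (n := N + 1)
    simpa using this
  have tel2 : ∑ β ∈ Finset.range (N + 1),
      (Faux (1 / N : ℝ) z β - Faux (1 / N : ℝ) z (β - 1))
        = Faux (1 / N : ℝ) z N - Faux (1 / N : ℝ) z (-1) := by
    have := Finset.sum_range_sub (f := fun n : ℕ => Faux (1 / N : ℝ) z ((n : ℤ) - 1))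
      (n := N + 1)
    simp only [Nat.cast_add, Nat.cast_one, add_sub_cancel_right] at this
    simpa using this
  have key : (∑ β ∈ Finset.range (N + 1), optC1 N z β * Real.exp ((1 / N : ℝ) * β))
      * (2 * (1 - Real.exp (2 * (1 / N : ℝ))))
      = Real.exp z * (2 * (1 - Real.exp (2 * (1 / N : ℝ)))) := by
    rw [Finset.sum_mul]
    calc ∑ β ∈ Finset.range (N + 1),
          optC1 N z β * Real.exp ((1 / N : ℝ) * β) * (2 * (1 - Real.exp (2 * (1 / N : ℝ))))
        = ∑ β ∈ Finset.range (N + 1),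
            ((Faux (1 / N : ℝ) z (β + 1) - Faux (1 / N : ℝ) z β)
              - Real.exp (2 * (1 / N : ℝ))
                * (Faux (1 / N : ℝ) z β - Faux (1 / N : ℝ) z (β - 1))) := by
          exact Finset.sum_congr rfl fun β _ => optC1_term_eq N hN z β
      _ = (∑ β ∈ Finset.range (N + 1),
            (Faux (1 / N : ℝ) z (β + 1) - Faux (1 / N : ℝ) z β))
          - Real.exp (2 * (1 / N : ℝ)) * ∑ β ∈ Finset.range (N + 1),
            (Faux (1 / N : ℝ) z β - Faux (1 / N : ℝ) z (β - 1)) := by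
          rw [Finset.sum_sub_distrib, Finset.mul_sum]
      _ = Real.exp z * (2 * (1 - Real.exp (2 * (1 / N : ℝ)))) := by
          rw [tel1, tel2]; exact optC1_endpoint N hN z hz
  have hsum : ∑ β ∈ Finset.range (N + 1), optC1 N z β * Real.exp ((1 / N : ℝ) * β)
      = Real.exp z := mul_right_cancel₀ hX key
  exact ⟨hsum, by rw [hsum]; ring⟩
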